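/- In the polynomial ring ℚ[a₀,a₁,a₂,a₃,b₀,b₁,b₂] in seven variables, the radical of the ideal J = ⟨a₃, 3b₁b₂ − 4a₂, 6a₀ − 6b₀b₁ + a₁b₁, 3b₁² − 8a₁ + 12b₀, b₂², b₂(a₁ − 3b₀), (a₁ − 3b₀)²⟩ equals the ideal ⟨8a₀ − b₁³, a₂, b₂, a₃, 4b₀ − b₁², 4a₁ − 3b₁²⟩. -/

import Mathlib

open MvPolynomial

-- Affine coordinates `a₀,a₁,a₂,a₃,b₀,b₁,b₂` on the chart `b₃ = a₆ = 1`.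
noncomputable def a0 : MvPolynomial (Fin 7) ℚ := X 0
noncomputable def a1 : MvPolynomial (Fin 7) ℚ := X 1
noncomputable def a2 : MvPolynomial (Fin 7) ℚ := X 2
noncomputable def a3 : MvPolynomial (Fin 7) ℚ := X 3
noncomputable def b0 : MvPolynomial (Fin 7) ℚ := X 4
noncomputable def b1 : MvPolynomial (Fin 7) ℚ := X 5
noncomputable def b2 : MvPolynomial (Fin 7) ℚ := X 6

/-- parametrization of the curve C -/
noncomputable def tauC : Fin 7 → Polynomial ℚ
  | 0 => Polynomial.C (1/8) * Polynomial.X ^ 3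
  | 1 => Polynomial.C (3/4) * Polynomial.X ^ 2
  | 2 => 0
  | 3 => 0
  | 4 => Polynomial.C (1/4) * Polynomial.X ^ 2
  | 5 => Polynomial.X
  | 6 => 0

noncomputable def sigC : Fin 7 → MvPolynomial (Fin 7) ℚ
  | 0 => C (1/8) * X 5 ^ 3
  | 1 => C (3/4) * X 5 ^ 2
  | 2 => 0
  | 3 => 0
  | 4 => C (1/4) * X 5 ^ 2
  | 5 => X 5
  | 6 => 0

/-- the ideal of the curve C -/
noncomputable def KC : Ideal (MvPolynomial (Fin 7) ℚ) :=
  Ideal.span ({8 * a0 - b1 ^ 3, a2, b2, a3, 4 * b0 - b1 ^ 2,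
        4 * a1 - 3 * b1 ^ 2} : Set (MvPolynomial (Fin 7) ℚ))

lemma mem1 : 8 * a0 - b1 ^ 3 ∈ KC := Ideal.subset_span (by simp)
lemma mem2 : a2 ∈ KC := Ideal.subset_span (by simp)
lemma mem3 : b2 ∈ KC := Ideal.subset_span (by simp)
lemma mem4 : a3 ∈ KC := Ideal.subset_span (by simp)
lemma mem5 : 4 * b0 - b1 ^ 2 ∈ KC := Ideal.subset_span (by simp)
lemma mem6 : 4 * a1 - 3 * b1 ^ 2 ∈ KC := Ideal.subset_span (by simp)

lemma cancelC {x : MvPolynomial (Fin 7) ℚ} {I : Ideal (MvPolynomial (Fin 7) ℚ)}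
    (q : ℚ) (hq : q ≠ 0) (h : C q * x ∈ I) : x ∈ I := by
  have h2 := I.mul_mem_left (C q⁻¹) h
  rwa [← mul_assoc, ← C_mul, inv_mul_cancel₀ hq, C_1, one_mul] at h2

lemma sub_aeval_mem {I : Ideal (MvPolynomial (Fin 7) ℚ)}
    {σ : Fin 7 → MvPolynomial (Fin 7) ℚ} (h : ∀ i, X i - σ i ∈ I)
    (p : MvPolynomial (Fin 7) ℚ) : p - aeval σ p ∈ I := by
  induction p using MvPolynomial.induction_on with
  | C a => simpa using I.zero_mem
  | add p q hp hq =>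
      have e : p + q - aeval σ (p + q) = (p - aeval σ p) + (q - aeval σ q) := by
        rw [map_add]; ring
      rw [e]; exact I.add_mem hp hq
  | mul_X p i hp =>
      have e : p * X i - aeval σ (p * X i)
          = (p - aeval σ p) * X i + aeval σ p * (X i - σ i) := by
        rw [map_mul, aeval_X]; ring
      rw [e]; exact I.add_mem (I.mul_mem_right _ hp) (I.mul_mem_left _ (h i))

lemma X_sub_sig_mem : ∀ i, X i - sigC i ∈ KC := by
  intro i
  fin_cases i
  · show X (0 : Fin 7) - sigC 0 ∈ KC
    have e : X (0 : Fin 7) - sigC 0 = C (1/8 : ℚ) * (8 * a0 - b1 ^ 3) := by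
      show X (0 : Fin 7) - C (1/8 : ℚ) * X 5 ^ 3 = _
      rw [a0, b1, mul_sub, show ((8 : MvPolynomial (Fin 7) ℚ)) = C (8:ℚ) from (map_ofNat C 8).symm,
        ← mul_assoc, ← C_mul]
      norm_num
    rw [e]; exact KC.mul_mem_left _ mem1
  · show X (1 : Fin 7) - sigC 1 ∈ KC
    have e : X (1 : Fin 7) - sigC 1 = C (1/4 : ℚ) * (4 * a1 - 3 * b1 ^ 2) := by
      show X (1 : Fin 7) - C (3/4 : ℚ) * X 5 ^ 2 = _
      rw [a1, b1, mul_sub, show ((4 : MvPolynomial (Fin 7) ℚ)) = C (4:ℚ) from (map_ofNat C 4).symm,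
        show ((3 : MvPolynomial (Fin 7) ℚ)) = C (3:ℚ) from (map_ofNat C 3).symm,
        ← mul_assoc, ← C_mul, ← mul_assoc, ← C_mul]
      norm_num
    rw [e]; exact KC.mul_mem_left _ mem6
  · simpa [sigC, a2] using mem2
  · simpa [sigC, a3] using mem4
  · show X (4 : Fin 7) - sigC 4 ∈ KC
    have e : X (4 : Fin 7) - sigC 4 = C (1/4 : ℚ) * (4 * b0 - b1 ^ 2) := by
      show X (4 : Fin 7) - C (1/4 : ℚ) * X 5 ^ 2 = _
      rw [b0, b1, mul_sub, show ((4 : MvPolynomial (Fin 7) ℚ)) = C (4:ℚ) from (map_ofNat C 4).symm,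
        ← mul_assoc, ← C_mul]
      norm_num
    rw [e]; exact KC.mul_mem_left _ mem5
  · simpa [sigC] using KC.zero_mem
  · simpa [sigC, b2] using mem3

lemma comp_eq : (Polynomial.aeval (X 5 : MvPolynomial (Fin 7) ℚ)).comp (aeval tauC) = aeval sigC := by
  apply MvPolynomial.algHom_ext
  intro i
  fin_cases i <;> simp [tauC, sigC, algebraMap_eq]

lemma KC_eq_ker : KC = RingHom.ker (aeval tauC : MvPolynomial (Fin 7) ℚ →ₐ[ℚ] Polynomial ℚ) := by
  apply le_antisymm
  · rw [KC, Ideal.span_le]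
    rintro p hp
    simp only [Set.mem_insert_iff, Set.mem_singleton_iff] at hp
    rcases hp with rfl | rfl | rfl | rfl | rfl | rfl <;>
      · simp only [SetLike.mem_coe, RingHom.mem_ker]
        apply Polynomial.funext
        intro x
        rw [Polynomial.eval_zero]
        simp only [a0, a1, a2, a3, b0, b1, b2, map_sub, map_mul, map_pow, map_ofNat,
          map_zero, aeval_X, tauC, Polynomial.eval_mul, Polynomial.eval_pow,
          Polynomial.eval_C, Polynomial.eval_X, Polynomial.eval_ofNat, Polynomial.eval_sub,
          Polynomial.eval_zero]
        try ring
  · intro p hp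
    have h1 : p - aeval sigC p ∈ KC := sub_aeval_mem X_sub_sig_mem p
    have h2 : aeval sigC p = 0 := by
      rw [← comp_eq]
      simp only [AlgHom.coe_comp, Function.comp_apply]
      rw [show (aeval tauC) p = 0 from hp]
      simp
    rwa [h2, sub_zero] at h1

lemma KC_prime : KC.IsPrime := by
  rw [KC_eq_ker]
  exact RingHom.ker_isPrime _

/-- The radical of the indeterminacy ideal `J` on the chart `b₃ = a₆ = 1` is
the ideal of the curve `C`. -/
theorem stmt12 :
    (Ideal.span
      ({a3, 3 * b1 * b2 - 4 * a2, 6 * a0 - 6 * b0 * b1 + a1 * b1,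
        3 * b1 ^ 2 - 8 * a1 + 12 * b0, b2 ^ 2, b2 * (a1 - 3 * b0),
        (a1 - 3 * b0) ^ 2} : Set (MvPolynomial (Fin 7) ℚ))).radical =
    Ideal.span
      ({8 * a0 - b1 ^ 3, a2, b2, a3, 4 * b0 - b1 ^ 2,
        4 * a1 - 3 * b1 ^ 2} : Set (MvPolynomial (Fin 7) ℚ)) := by
  set J : Ideal (MvPolynomial (Fin 7) ℚ) := Ideal.span
      ({a3, 3 * b1 * b2 - 4 * a2, 6 * a0 - 6 * b0 * b1 + a1 * b1,
        3 * b1 ^ 2 - 8 * a1 + 12 * b0, b2 ^ 2, b2 * (a1 - 3 * b0),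
        (a1 - 3 * b0) ^ 2} : Set (MvPolynomial (Fin 7) ℚ)) with hJ
  show J.radical = KC
  -- generators of J
  have hj1 : a3 ∈ J := Ideal.subset_span (by simp)
  have hj2 : 3 * b1 * b2 - 4 * a2 ∈ J := Ideal.subset_span (by simp)
  have hj3 : 6 * a0 - 6 * b0 * b1 + a1 * b1 ∈ J := Ideal.subset_span (by simp)
  have hj4 : 3 * b1 ^ 2 - 8 * a1 + 12 * b0 ∈ J := Ideal.subset_span (by simp)
  have hj5 : b2 ^ 2 ∈ J := Ideal.subset_span (by simp)
  have hj6 : b2 * (a1 - 3 * b0) ∈ J := Ideal.subset_span (by simp)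
  have hj7 : (a1 - 3 * b0) ^ 2 ∈ J := Ideal.subset_span (by simp)
  apply le_antisymm
  · -- J.radical ≤ KC : since J ≤ KC and KC is prime (hence radical)
    have hJK : J ≤ KC := by
      rw [hJ, Ideal.span_le]
      rintro p hp
      simp only [Set.mem_insert_iff, Set.mem_singleton_iff] at hp
      rcases hp with rfl | rfl | rfl | rfl | rfl | rfl | rfl
      · exact mem4
      · have e : 3 * b1 * b2 - 4 * a2 = (3 * b1) * b2 + (-4) * a2 := by ring
        rw [e]; exact KC.add_mem (KC.mul_mem_left _ mem3) (KC.mul_mem_left _ mem2)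
      · apply cancelC 4 (by norm_num)
        have e : C (4:ℚ) * (6 * a0 - 6 * b0 * b1 + a1 * b1)
            = 3 * (8 * a0 - b1 ^ 3) + (-6 * b1) * (4 * b0 - b1 ^ 2)
              + b1 * (4 * a1 - 3 * b1 ^ 2) := by
          rw [map_ofNat]; ring
        rw [e]
        exact KC.add_mem (KC.add_mem (KC.mul_mem_left _ mem1) (KC.mul_mem_left _ mem5))
          (KC.mul_mem_left _ mem6)
      · have e : 3 * b1 ^ 2 - 8 * a1 + 12 * b0
            = 3 * (4 * b0 - b1 ^ 2) + (-2) * (4 * a1 - 3 * b1 ^ 2) := by ring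
        rw [e]; exact KC.add_mem (KC.mul_mem_left _ mem5) (KC.mul_mem_left _ mem6)
      · have e : b2 ^ 2 = b2 * b2 := by ring
        rw [e]; exact KC.mul_mem_left _ mem3
      · exact KC.mul_mem_right _ mem3
      · apply cancelC 16 (by norm_num)
        have e : C (16:ℚ) * ((a1 - 3 * b0) ^ 2)
            = (-3 * ((4 * a1 - 3 * b1 ^ 2) - 3 * (4 * b0 - b1 ^ 2))) * (4 * b0 - b1 ^ 2)
              + ((4 * a1 - 3 * b1 ^ 2) - 3 * (4 * b0 - b1 ^ 2)) * (4 * a1 - 3 * b1 ^ 2) := by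
          rw [map_ofNat]; ring
        rw [e]
        exact KC.add_mem (KC.mul_mem_left _ mem5) (KC.mul_mem_left _ mem6)
    calc J.radical ≤ KC.radical := Ideal.radical_mono hJK
      _ = KC := KC_prime.radical
  · -- KC ≤ J.radical
    rw [KC, Ideal.span_le]
    have hd : a1 - 3 * b0 ∈ J.radical :=
      Ideal.mem_radical_of_pow_mem (m := 2) (Ideal.le_radical hj7)
    have hb2 : b2 ∈ J.radical :=
      Ideal.mem_radical_of_pow_mem (m := 2) (Ideal.le_radical hj5)
    have hk5 : 4 * b0 - b1 ^ 2 ∈ J.radical := by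
      apply cancelC 3 (by norm_num)
      have e : C (3:ℚ) * (4 * b0 - b1 ^ 2)
          = (-1) * (3 * b1 ^ 2 - 8 * a1 + 12 * b0) + (-8) * (a1 - 3 * b0) := by
        rw [map_ofNat]; ring
      rw [e]
      exact Ideal.add_mem _ (Ideal.mul_mem_left _ _ (Ideal.le_radical hj4))
        (Ideal.mul_mem_left _ _ hd)
    have hk6 : 4 * a1 - 3 * b1 ^ 2 ∈ J.radical := by
      have e : 4 * a1 - 3 * b1 ^ 2 = 3 * (4 * b0 - b1 ^ 2) + 4 * (a1 - 3 * b0) := by ring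
      rw [e]
      exact Ideal.add_mem _ (Ideal.mul_mem_left _ _ hk5) (Ideal.mul_mem_left _ _ hd)
    rintro p hp
    simp only [Set.mem_insert_iff, Set.mem_singleton_iff] at hp
    rcases hp with rfl | rfl | rfl | rfl | rfl | rfl
    · apply cancelC 3 (by norm_num)
      have e : C (3:ℚ) * (8 * a0 - b1 ^ 3)
          = 4 * (6 * a0 - 6 * b0 * b1 + a1 * b1) + (6 * b1) * (4 * b0 - b1 ^ 2)
            + (-b1) * (4 * a1 - 3 * b1 ^ 2) := by
        rw [map_ofNat]; ring
      rw [e]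
      exact Ideal.add_mem _ (Ideal.add_mem _ (Ideal.mul_mem_left _ _ (Ideal.le_radical hj3))
        (Ideal.mul_mem_left _ _ hk5)) (Ideal.mul_mem_left _ _ hk6)
    · apply cancelC 4 (by norm_num)
      have e : C (4:ℚ) * a2 = (-1) * (3 * b1 * b2 - 4 * a2) + (3 * b1) * b2 := by
        rw [map_ofNat]; ring
      rw [e]
      exact Ideal.add_mem _ (Ideal.mul_mem_left _ _ (Ideal.le_radical hj2))
        (Ideal.mul_mem_left _ _ hb2)
    · exact hb2
    · exact Ideal.le_radical hj1
    · exact hk5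
    · exact hk6
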